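/- One has lim_{m→∞} α_m(1) = 1. Consequently, if α_m(1) ≠ 0 for every m ∈ ℕ₀, then the sequence (1/α_m(1))_{m∈ℕ₀} is bounded: sup_{m∈ℕ₀} 1/|α_m(1)| < ∞. -/

import Mathlib

open Real Set MeasureTheory Filter

/-- The kernel `L_ℓ(r,s) = (1/(2ℓ+1))(r^{ℓ+1}/s^ℓ − s^{ℓ+1}/r^ℓ)`. -/
noncomputable def besselKer (ℓ r s : ℝ) : ℝ :=
  (1 / (2 * ℓ + 1)) * (r ^ (ℓ + 1) / s ^ ℓ - s ^ (ℓ + 1) / r ^ ℓ)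

/-- The iterates `ψ₀^ℓ(r) = r^{ℓ+1}`,
`ψ_k^ℓ(r) = ∫₀^r L_ℓ(r,s) V(s) ψ_{k−1}^ℓ(s) ds`. -/
noncomputable def sppsPsi (ℓ : ℝ) (V : ℝ → ℂ) : ℕ → ℝ → ℂ
  | 0 => fun r => ((r ^ (ℓ + 1) : ℝ) : ℂ)
  | k + 1 => fun r => ∫ s in Set.Ioc (0 : ℝ) r,
      ((besselKer ℓ r s : ℝ) : ℂ) * V s * sppsPsi ℓ V k s

/-- The regular solution `w_ℓ(r) = Σ_{k=0}^∞ ψ_k^ℓ(r)`. -/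
noncomputable def sppsW (ℓ : ℝ) (V : ℝ → ℂ) (r : ℝ) : ℂ :=
  ∑' k : ℕ, sppsPsi ℓ V k r

/-- `ℓ_m = m + (d−3)/2`. -/
noncomputable def ellm (d m : ℕ) : ℝ := (m : ℝ) + ((d : ℝ) - 3) / 2

/-- `α_m(r) = y_m(r)/r^{ℓ_m+1}` where `y_m = w_{ℓ_m}`. -/
noncomputable def alphaFun (d : ℕ) (V : ℝ → ℂ) (m : ℕ) (r : ℝ) : ℂ :=
  sppsW (ellm d m) V r / ((r ^ (ellm d m + 1) : ℝ) : ℂ)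

lemma besselKer_abs_le (ℓ : ℝ) (hℓ : 0 ≤ ℓ) {r s : ℝ} (hs : 0 < s) (hsr : s ≤ r) :
    |besselKer ℓ r s| ≤ (1 / (2 * ℓ + 1)) * (r ^ (ℓ + 1) / s ^ ℓ) := by
  have hr : 0 < r := lt_of_lt_of_le hs hsr
  have h2 : (0:ℝ) < 2 * ℓ + 1 := by linarith
  have hA : (0:ℝ) ≤ r ^ (ℓ + 1) / s ^ ℓ :=
    div_nonneg (rpow_nonneg hr.le _) (rpow_nonneg hs.le _)
  have hb : s ^ (ℓ + 1) / r ^ ℓ ≤ r ^ (ℓ + 1) / s ^ ℓ := by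
    rw [div_le_div_iff₀ (rpow_pos_of_pos hr ℓ) (rpow_pos_of_pos hs ℓ)]
    rw [← rpow_add hs, ← rpow_add hr]
    exact rpow_le_rpow hs.le hsr (by linarith)
  have hb0 : (0:ℝ) ≤ s ^ (ℓ + 1) / r ^ ℓ :=
    div_nonneg (rpow_nonneg hs.le _) (rpow_nonneg hr.le _)
  rw [besselKer, abs_mul, abs_of_pos (by positivity : (0:ℝ) < 1 / (2*ℓ+1))]
  gcongr
  rw [abs_sub_le_iff]
  constructor <;> linarith

lemma psi_norm_le (ℓ : ℝ) (hℓ : 0 ≤ ℓ) (V : ℝ → ℂ)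
    (hV : IntegrableOn (fun s : ℝ => s * ‖V s‖) (Set.Ioc 0 1)) :
    ∀ (k : ℕ) (r : ℝ), r ∈ Set.Ioc (0:ℝ) 1 →
      ‖sppsPsi ℓ V k r‖ ≤ r ^ (ℓ + 1) *
        ((∫ s in Set.Ioc (0:ℝ) 1, s * ‖V s‖) / (2 * ℓ + 1)) ^ k := by
  set I : ℝ := ∫ s in Set.Ioc (0:ℝ) 1, s * ‖V s‖ with hI
  have hI0 : 0 ≤ I := setIntegral_nonneg measurableSet_Ioc
    (fun s hs => mul_nonneg hs.1.le (norm_nonneg _))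
  have h2 : (0:ℝ) < 2 * ℓ + 1 := by linarith
  set q : ℝ := I / (2 * ℓ + 1) with hq
  have hq0 : 0 ≤ q := div_nonneg hI0 h2.le
  intro k
  induction k with
  | zero =>
    intro r hr
    simp only [sppsPsi, pow_zero, mul_one, Complex.norm_real]
    rw [Real.norm_eq_abs, abs_of_nonneg (rpow_nonneg hr.1.le _)]
  | succ k ih =>
    intro r hr
    have hr0 : 0 < r := hr.1
    have hsub : Set.Ioc (0:ℝ) r ⊆ Set.Ioc 0 1 := Set.Ioc_subset_Ioc_right hr.2
    have hVr : IntegrableOn (fun s : ℝ => s * ‖V s‖) (Set.Ioc 0 r) := hV.mono_set hsub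
    set c : ℝ := (1 / (2 * ℓ + 1)) * r ^ (ℓ + 1) * q ^ k with hc
    have hc0 : 0 ≤ c := by positivity
    have hgint : IntegrableOn (fun s : ℝ => c * (s * ‖V s‖)) (Set.Ioc 0 r) :=
      hVr.const_mul c
    have hpt : ∀ s ∈ Set.Ioc (0:ℝ) r,
        ‖((besselKer ℓ r s : ℝ) : ℂ) * V s * sppsPsi ℓ V k s‖ ≤ c * (s * ‖V s‖) := by
      intro s hs
      have hs0 : 0 < s := hs.1
      have hs1 : s ∈ Set.Ioc (0:ℝ) 1 := hsub hs
      have hK := besselKer_abs_le ℓ hℓ hs0 hs.2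
      have hψ := ih s hs1
      calc ‖((besselKer ℓ r s : ℝ) : ℂ) * V s * sppsPsi ℓ V k s‖
          = |besselKer ℓ r s| * ‖V s‖ * ‖sppsPsi ℓ V k s‖ := by
            rw [norm_mul, norm_mul, Complex.norm_real, Real.norm_eq_abs]
        _ ≤ ((1 / (2 * ℓ + 1)) * (r ^ (ℓ + 1) / s ^ ℓ)) * ‖V s‖ * (s ^ (ℓ + 1) * q ^ k) := by
            gcongr
        _ = c * (s * ‖V s‖) := by
            rw [hc]
            have : s ^ (ℓ + 1) = s ^ ℓ * s := by
              rw [rpow_add_one hs0.ne' ℓ]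
            rw [this]
            have hsl : s ^ ℓ ≠ 0 := (rpow_pos_of_pos hs0 ℓ).ne'
            field_simp
    have step1 : ‖sppsPsi ℓ V (k+1) r‖ ≤ ∫ s in Set.Ioc (0:ℝ) r,
        ‖((besselKer ℓ r s : ℝ) : ℂ) * V s * sppsPsi ℓ V k s‖ := by
      exact norm_integral_le_integral_norm _
    have step2 : (∫ s in Set.Ioc (0:ℝ) r,
        ‖((besselKer ℓ r s : ℝ) : ℂ) * V s * sppsPsi ℓ V k s‖)
        ≤ ∫ s in Set.Ioc (0:ℝ) r, c * (s * ‖V s‖) := by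
      apply integral_mono_of_nonneg
      · exact Filter.Eventually.of_forall fun s => norm_nonneg _
      · exact hgint
      · exact (ae_restrict_iff' measurableSet_Ioc).2 (Filter.Eventually.of_forall hpt)
    have step3 : (∫ s in Set.Ioc (0:ℝ) r, c * (s * ‖V s‖)) ≤ c * I := by
      rw [integral_const_mul]
      gcongr
      apply setIntegral_mono_set hV
      · exact (ae_restrict_iff' measurableSet_Ioc).2 (Filter.Eventually.of_forall
          (fun s hs => mul_nonneg hs.1.le (norm_nonneg _)))
      · exact Filter.Eventually.of_forall hsub
    calc ‖sppsPsi ℓ V (k+1) r‖ ≤ c * I := le_trans step1 (le_trans step2 step3)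
      _ = r ^ (ℓ + 1) * q ^ (k+1) := by
          rw [hc, pow_succ, hq]; field_simp

lemma sppsW_one_sub_one (ℓ : ℝ) (hℓ : 0 ≤ ℓ) (V : ℝ → ℂ)
    (hV : IntegrableOn (fun s : ℝ => s * ‖V s‖) (Set.Ioc 0 1))
    (hq1 : (∫ s in Set.Ioc (0:ℝ) 1, s * ‖V s‖) / (2 * ℓ + 1) < 1) :
    ‖sppsW ℓ V 1 - 1‖ ≤ ((∫ s in Set.Ioc (0:ℝ) 1, s * ‖V s‖) / (2 * ℓ + 1)) /
      (1 - (∫ s in Set.Ioc (0:ℝ) 1, s * ‖V s‖) / (2 * ℓ + 1)) := by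
  set I : ℝ := ∫ s in Set.Ioc (0:ℝ) 1, s * ‖V s‖ with hI
  have hI0 : 0 ≤ I := setIntegral_nonneg measurableSet_Ioc
    (fun s hs => mul_nonneg hs.1.le (norm_nonneg _))
  have h2 : (0:ℝ) < 2 * ℓ + 1 := by linarith
  set q : ℝ := I / (2 * ℓ + 1) with hq
  have hq0 : 0 ≤ q := div_nonneg hI0 h2.le
  have h1 : (1:ℝ) ∈ Set.Ioc (0:ℝ) 1 := ⟨one_pos, le_refl 1⟩
  have hbd : ∀ k : ℕ, ‖sppsPsi ℓ V k 1‖ ≤ q ^ k := by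
    intro k
    have := psi_norm_le ℓ hℓ V hV k 1 h1
    rwa [Real.one_rpow, one_mul] at this
  have hsum : Summable (fun k : ℕ => sppsPsi ℓ V k 1) :=
    Summable.of_norm_bounded (summable_geometric_of_lt_one hq0 hq1) hbd
  have hsum' : Summable (fun k : ℕ => sppsPsi ℓ V (k + 1) 1) :=
    (summable_nat_add_iff 1).2 hsum
  have h0 : sppsPsi ℓ V 0 1 = 1 := by
    simp [sppsPsi]
  have hW : sppsW ℓ V 1 - 1 = ∑' k : ℕ, sppsPsi ℓ V (k + 1) 1 := by
    rw [sppsW, hsum.tsum_eq_zero_add, h0]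
    ring
  rw [hW]
  have hgs : Summable (fun k : ℕ => q ^ (k + 1)) :=
    (summable_nat_add_iff 1).2 (summable_geometric_of_lt_one hq0 hq1)
  have hns : Summable (fun k : ℕ => ‖sppsPsi ℓ V (k + 1) 1‖) :=
    Summable.of_nonneg_of_le (fun k => norm_nonneg _) (fun k => hbd (k + 1)) hgs
  calc ‖∑' k : ℕ, sppsPsi ℓ V (k + 1) 1‖ ≤ ∑' k : ℕ, ‖sppsPsi ℓ V (k + 1) 1‖ :=
        norm_tsum_le_tsum_norm hns
    _ ≤ ∑' k : ℕ, q ^ (k + 1) := Summable.tsum_le_tsum (fun k => hbd (k + 1)) hns hgs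
    _ = q / (1 - q) := by
        have : ∀ k : ℕ, q ^ (k + 1) = q * q ^ k := fun k => pow_succ' q k
        rw [tsum_congr this, tsum_mul_left, tsum_geometric_of_lt_one hq0 hq1,
          div_eq_mul_inv]

open Topology

/-- `α_m(1) → 1` as `m → ∞`; consequently, if `α_m(1) ≠ 0` for every `m`, then the
sequence `(1/α_m(1))` is bounded. -/
theorem alphaFun_one_tendsto (d : ℕ) (hd : 3 ≤ d) (V : ℝ → ℂ) (hVmeas : Measurable V)
    (hV : IntegrableOn (fun s : ℝ => s * ‖V s‖) (Set.Ioc 0 1)) :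
    Filter.Tendsto (fun m : ℕ => alphaFun d V m 1) Filter.atTop (nhds 1) ∧
    ((∀ m : ℕ, alphaFun d V m 1 ≠ 0) →
      ∃ C : ℝ, ∀ m : ℕ, 1 / ‖alphaFun d V m 1‖ ≤ C) := by
  have hd3 : (3:ℝ) ≤ (d:ℝ) := by exact_mod_cast hd
  have hℓ : ∀ m : ℕ, 0 ≤ ellm d m := by
    intro m
    have : (0:ℝ) ≤ (m:ℝ) := Nat.cast_nonneg m
    unfold ellm; linarith
  have hα : ∀ m : ℕ, alphaFun d V m 1 = sppsW (ellm d m) V 1 := by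
    intro m
    rw [alphaFun, Real.one_rpow, Complex.ofReal_one, div_one]
  set I : ℝ := ∫ s in Set.Ioc (0:ℝ) 1, s * ‖V s‖ with hI
  have hI0 : 0 ≤ I := setIntegral_nonneg measurableSet_Ioc
    (fun s hs => mul_nonneg hs.1.le (norm_nonneg _))
  set Q : ℕ → ℝ := fun m => I / (2 * ellm d m + 1) with hQ
  have hden : Tendsto (fun m : ℕ => 2 * ellm d m + 1) atTop atTop := by
    apply tendsto_atTop_add_const_right
    apply Tendsto.const_mul_atTop two_pos
    unfold ellm
    exact tendsto_atTop_add_const_right _ _ tendsto_natCast_atTop_atTop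
  have hQ0 : Tendsto Q atTop (𝓝 0) := Tendsto.div_atTop tendsto_const_nhds hden
  have hev : ∀ᶠ m : ℕ in atTop, Q m < 1/2 := hQ0.eventually_lt_const (by norm_num)
  have hQnn : ∀ m, 0 ≤ Q m := by
    intro m
    have : (0:ℝ) < 2 * ellm d m + 1 := by have := hℓ m; linarith
    exact div_nonneg hI0 this.le
  have hbound : ∀ᶠ m : ℕ in atTop, ‖alphaFun d V m 1 - 1‖ ≤ 2 * Q m := by
    filter_upwards [hev] with m hm
    have h2 : (0:ℝ) < 2 * ellm d m + 1 := by have := hℓ m; linarith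
    have hQm : I / (2 * ellm d m + 1) = Q m := rfl
    have h1 := sppsW_one_sub_one (ellm d m) (hℓ m) V hV (by
      rw [hQm]; linarith [hQnn m])
    rw [hQm] at h1
    rw [hα]
    refine le_trans h1 ?_
    rw [div_le_iff₀ (by linarith [hQnn m] : (0:ℝ) < 1 - Q m)]
    nlinarith [hQnn m]
  have htend : Tendsto (fun m : ℕ => alphaFun d V m 1) atTop (𝓝 1) := by
    rw [tendsto_iff_norm_sub_tendsto_zero]
    apply squeeze_zero' (Filter.Eventually.of_forall fun m => norm_nonneg _) hbound
    have := hQ0.const_mul (2:ℝ)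
    simpa using this
  refine ⟨htend, fun _ => ?_⟩
  have hn : Tendsto (fun m : ℕ => 1 / ‖alphaFun d V m 1‖) atTop (𝓝 1) := by
    have h1 : Tendsto (fun m : ℕ => ‖alphaFun d V m 1‖) atTop (𝓝 1) := by
      simpa using htend.norm
    simpa [one_div] using h1.inv₀ one_ne_zero
  obtain ⟨C, hC⟩ := hn.bddAbove_range
  exact ⟨C, fun m => hC ⟨m, rfl⟩⟩
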